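/- Let λ be a nonempty partition of length at most n and λ⁽⁰⁾ its bottom partition (λ with its first part removed). Then f_λ(n+1)/f_{λ⁽⁰⁾}(n) = Π_{j=1}^{λ₁} ((n+1) + c_λ(1,j)) / h_λ(1,j), where c_λ(1,j) = j−1 is the content and h_λ(1,j) = λ₁ + λ'_j − j is the hook length of box (1,j) in λ. -/

import Mathlib

/-- Complete homogeneous symmetric polynomial of degree `m` in `n` real variables. -/
noncomputable def hh (n m : ℕ) (u : Fin n → ℝ) : ℝ :=
  ∑ c ∈ Finset.Nat.antidiagonalTuple n m, ∏ i, u i ^ c i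

/-- `hh` extended by `0` to negative degrees. -/
noncomputable def hZ (n : ℕ) (m : ℤ) (u : Fin n → ℝ) : ℝ :=
  if 0 ≤ m then hh n m.toNat u else 0

/-- Schur polynomial of the partition `lam` (of length at most `l`), evaluated at `k`
real variables, defined via the Jacobi–Trudi determinant. -/
noncomputable def schur {l : ℕ} (lam : Fin l → ℕ) {k : ℕ} (u : Fin k → ℝ) : ℝ :=
  Matrix.det (Matrix.of fun i j : Fin l => hZ k ((lam i : ℤ) - (i : ℤ) + (j : ℤ)) u)

namespace HookContentAux
open Finset


lemma multichoose_sum (k n : ℕ) :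
    ∑ j ∈ range (n+1), Nat.multichoose k j = Nat.multichoose (k+1) n := by
  induction n with
  | zero => simp [Nat.multichoose]
  | succ n ih => rw [Finset.sum_range_succ, ih, Nat.multichoose_succ_succ, Nat.add_comm]

lemma length_aT (k : ℕ) : ∀ n, (List.Nat.antidiagonalTuple k n).length = Nat.multichoose k n := by
  induction k with
  | zero => intro n; cases n <;> simp [List.Nat.antidiagonalTuple, Nat.multichoose]
  | succ k ih =>
    intro n
    rw [List.Nat.antidiagonalTuple, List.length_flatMap]
    simp only [List.Nat.antidiagonal, List.map_map, List.length_map, Function.comp_def, ih]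
    show ∑ i ∈ range (n+1), Nat.multichoose k (n - i) = _
    rw [← multichoose_sum k n, ← Finset.sum_range_reflect]
    exact Finset.sum_congr rfl fun x hx => by have := mem_range.mp hx; congr 1; omega

lemma card_aT (k n : ℕ) : (Finset.Nat.antidiagonalTuple k n).card = (n + k - 1).choose n := by
  rw [show n + k - 1 = k + n - 1 by omega, ← Nat.multichoose_eq, ← length_aT k n]; rfl

lemma hh_ones (k n : ℕ) : hh k n (fun _ => 1) = ((n + k - 1).choose n : ℝ) := by
  unfold hh
  simp [card_aT]

lemma prod_Ico_nat (k d : ℕ) (hk : 1 ≤ k) :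
    ∏ t ∈ Ico 1 k, (d + t) = (k-1).factorial * (d + k - 1).choose d := by
  have h1 : ∏ t ∈ Ico 1 k, (d + t) = ∏ i ∈ range (k-1), (d + (1 + i)) := by
    rw [Finset.prod_Ico_eq_prod_range]
  have h2 : (d + k - 1).descFactorial (k-1) = ∏ i ∈ range (k-1), (d + k - 1 - i) :=
    Nat.descFactorial_eq_prod_range _ _
  have h3 : ∏ i ∈ range (k-1), (d + (1 + i)) = ∏ i ∈ range (k-1), (d + k - 1 - i) := by
    rw [← Finset.prod_range_reflect]
    exact Finset.prod_congr rfl fun x hx => by have := mem_range.mp hx; omega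
  rw [h1, h3, ← h2, Nat.descFactorial_eq_factorial_mul_choose]
  congr 1
  rw [← Nat.choose_symm (by omega : k - 1 ≤ d + k - 1), show d + k - 1 - (k-1) = d by omega]

lemma hZ_ones (k : ℕ) (hk : 1 ≤ k) (a : ℤ) (ha : -(k:ℤ) + 1 ≤ a) :
    hZ k a (fun _ => 1) = (∏ t ∈ Ico 1 k, ((a:ℝ) + t)) / (k-1).factorial := by
  by_cases h0 : 0 ≤ a
  · rw [hZ, if_pos h0, hh_ones]
    lift a to ℕ using h0 with d
    rw [Int.toNat_natCast]
    rw [eq_div_iff (by positivity : ((k-1).factorial : ℝ) ≠ 0)]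
    have := congrArg (fun x : ℕ => (x : ℝ)) (prod_Ico_nat k d hk)
    push_cast at this ⊢
    rw [this]
    ring
  · rw [hZ, if_neg h0, eq_comm, div_eq_zero_iff]
    left
    apply Finset.prod_eq_zero (i := (-a).toNat)
    · simp only [mem_Ico]; omega
    · have : ((-a).toNat : ℤ) = -a := Int.toNat_of_nonneg (by omega)
      have : ((-a).toNat : ℝ) = -(a:ℝ) := by exact_mod_cast congrArg (fun x : ℤ => (x:ℝ)) this
      rw [this]; ring

noncomputable def Gk (k r : ℕ) (y : ℤ) : ℝ := ∏ t ∈ Ico (r+1) k, ((y:ℝ) + t)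

noncomputable def Dk (k r : ℕ) (y : ℤ) : ℝ :=
  (∏ s ∈ range r, ((k-1-s : ℕ):ℝ)) * Gk k r y

lemma Gk_range (k r : ℕ) (y : ℤ) :
    Gk k r y = ∏ i ∈ range (k-(r+1)), ((y:ℝ) + (r+1+i : ℕ)) := by
  rw [Gk, Finset.prod_Ico_eq_prod_range]

lemma Gk_step (k r : ℕ) (y : ℤ) :
    Gk k r (y+1) = Gk k r y + ((k-1-r : ℕ):ℝ) * Gk k (r+1) y := by
  by_cases h : k ≤ r + 1
  · have h1 : k - (r+1) = 0 := by omega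
    have h2 : k - (r+2) = 0 := by omega
    have h3 : k - 1 - r = 0 := by omega
    rw [Gk_range, Gk_range, Gk_range, h1, h2, h3]
    simp
  · obtain ⟨n, hn⟩ : ∃ n, k - (r+2) = n := ⟨_, rfl⟩
    have h1 : k - (r+1) = n + 1 := by omega
    rw [Gk_range, Gk_range, Gk_range, h1, hn]
    rw [Finset.prod_range_succ, Finset.prod_range_succ']
    have e1 : ∀ i ∈ range n, (((y+1 : ℤ)):ℝ) + (r+1+i : ℕ) = (y:ℝ) + (r+2+i : ℕ) := by
      intro i _; push_cast; ring
    have e2 : ∀ i ∈ range n, (y:ℝ) + (r+1+(i+1) : ℕ) = (y:ℝ) + (r+2+i : ℕ) := by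
      intro i _; push_cast; ring
    rw [Finset.prod_congr rfl e1, Finset.prod_congr rfl e2]
    have hk1 : ((k - 1 - r : ℕ):ℝ) = (n:ℝ) + 1 := by
      have : k - 1 - r = n + 1 := by omega
      rw [this]; push_cast; ring
    rw [hk1]
    have c1 : (((y+1:ℤ)):ℝ) + (r+1+n:ℕ) = (y:ℝ) + (r+2+n:ℕ) := by push_cast; ring
    have c2 : ((y:ℝ) + (r+1+0:ℕ)) = (y:ℝ) + (r:ℕ) + 1 := by push_cast; ring
    rw [c1, c2]
    have hcast : ((r+2+n:ℕ):ℝ) = (r:ℝ) + 2 + n := by push_cast; ring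
    rw [hcast]
    ring
lemma Dk_step (k r : ℕ) (y : ℤ) : Dk k r (y+1) = Dk k r y + Dk k (r+1) y := by
  rw [Dk, Dk, Dk, Gk_step, Finset.prod_range_succ]
  ring

lemma newton (k : ℕ) : ∀ (j : ℕ) (y : ℤ),
    Gk k 0 (y + j) = ∑ r ∈ range (j+1), ((j.choose r : ℕ):ℝ) * Dk k r y := by
  intro j
  induction j with
  | zero => intro y; simp [Dk]
  | succ j ih =>
    intro y
    have harg : y + ((j+1 : ℕ):ℤ) = (y + 1) + (j:ℕ) := by push_cast; ring
    rw [harg, ih (y+1)]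
    have step : ∀ r, Dk k r (y+1) = Dk k r y + Dk k (r+1) y := fun r => Dk_step k r y
    simp only [step, mul_add, Finset.sum_add_distrib]
    have RHSsplit := Finset.sum_range_succ' (fun r => (((j+1).choose r : ℕ):ℝ) * Dk k r y) (j+1)
    rw [RHSsplit]
    have pascal : ∀ r ∈ range (j+1), (((j+1).choose (r+1) : ℕ):ℝ) * Dk k (r+1) y
        = ((j.choose r:ℕ):ℝ) * Dk k (r+1) y + ((j.choose (r+1):ℕ):ℝ) * Dk k (r+1) y := by
      intro r _; rw [Nat.choose_succ_succ]; push_cast; ring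
    rw [Finset.sum_congr rfl pascal, Finset.sum_add_distrib]
    have A : ∑ r ∈ range (j+1), ((j.choose (r+1):ℕ):ℝ) * Dk k (r+1) y
          + (((j+1).choose 0 : ℕ):ℝ) * Dk k 0 y
        = ∑ r ∈ range (j+1), ((j.choose r:ℕ):ℝ) * Dk k r y := by
      rw [Finset.sum_range_succ, Nat.choose_succ_self]
      rw [Finset.sum_range_succ' (fun r => ((j.choose r:ℕ):ℝ) * Dk k r y) j]
      simp
    linarith [A]


lemma prod_pairs_rev (l : ℕ) (f : Fin l → Fin l → ℝ) :
    ∏ i, ∏ j ∈ Ioi i, f (Fin.rev j) (Fin.rev i) = ∏ i, ∏ j ∈ Ioi i, f i j := by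
  rw [Finset.prod_sigma', Finset.prod_sigma']
  apply Finset.prod_nbij' (fun p : (Σ _ : Fin l, Fin l) => (⟨Fin.rev p.2, Fin.rev p.1⟩ : Σ _ : Fin l, Fin l))
    (fun p : (Σ _ : Fin l, Fin l) => (⟨Fin.rev p.2, Fin.rev p.1⟩ : Σ _ : Fin l, Fin l))
  · intro a ha
    simp only [Finset.mem_sigma, Finset.mem_univ, Finset.mem_Ioi, true_and] at *
    exact Fin.rev_lt_rev.mpr ha
  · intro a ha
    simp only [Finset.mem_sigma, Finset.mem_univ, Finset.mem_Ioi, true_and] at *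
    exact Fin.rev_lt_rev.mpr ha
  · intro a ha; simp [Fin.rev_rev]
  · intro a ha; simp [Fin.rev_rev]
  · intro a ha; rfl

lemma det_P (l : ℕ) (x : Fin l → ℤ) :
    Matrix.det (Matrix.of fun i r : Fin l => ∏ t ∈ Ico ((r:ℕ)+1) l, ((x i:ℝ) + t))
      = ∏ i : Fin l, ∏ j ∈ Ioi i, ((x i:ℝ) - (x j:ℝ)) := by
  set p : Fin l → Polynomial ℝ :=
    fun j => ∏ t ∈ Ico (l-(j:ℕ)) l, (Polynomial.X + Polynomial.C ((t:ℕ):ℝ)) with hp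
  have hdeg : ∀ j : Fin l, (p j).natDegree = (j:ℕ) := by
    intro j
    rw [hp, Polynomial.natDegree_prod]
    · simp only [Polynomial.natDegree_X_add_C]
      rw [Finset.sum_const, Nat.card_Ico, smul_eq_mul, mul_one]
      omega
    · intro t _
      exact Polynomial.X_add_C_ne_zero _
  have hmon : ∀ j, (p j).Monic :=
    fun j => Polynomial.monic_prod_of_monic _ _ (fun t _ => Polynomial.monic_X_add_C _)
  have hQ := Matrix.det_eval_matrixOfPolynomials_eq_det_vandermonde
    (fun i : Fin l => (x (Fin.rev i) : ℝ)) p hdeg hmon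
  have hsub : (Matrix.of fun i r : Fin l => ∏ t ∈ Ico ((r:ℕ)+1) l, ((x i:ℝ) + t))
      = (Matrix.of fun i j : Fin l =>
          (p j).eval ((x (Fin.rev i) : ℝ))).submatrix Fin.revPerm Fin.revPerm := by
    ext i r
    simp only [Matrix.submatrix_apply, Matrix.of_apply]
    have hrr : Fin.rev (Fin.revPerm i) = i := by simp [Fin.revPerm]
    rw [show (Fin.revPerm i : Fin l) = Fin.rev i from rfl]
    rw [Fin.rev_rev]
    rw [hp, Polynomial.eval_prod]
    have hIco : l - ((Fin.rev r : Fin l):ℕ) = (r:ℕ)+1 := by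
      have := r.isLt
      rw [Fin.val_rev]
      omega
    rw [show Fin.revPerm r = Fin.rev r from rfl, hIco]
    exact Finset.prod_congr rfl fun t _ => by simp
  rw [hsub, Matrix.det_submatrix_equiv_self, ← hQ, Matrix.det_vandermonde]
  exact prod_pairs_rev l (fun a b => (x a : ℝ) - (x b : ℝ))

lemma det_DkM (l k : ℕ) (hlk : l ≤ k) (x : Fin l → ℤ) :
    Matrix.det (Matrix.of fun i r : Fin l => Dk k (r:ℕ) (x i)) =
      (∏ r : Fin l, ∏ s ∈ range (r:ℕ), ((k-1-s : ℕ):ℝ)) *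
      ((∏ i : Fin l, ∏ t ∈ Ico l k, ((x i:ℝ) + t)) *
      (∏ i : Fin l, ∏ j ∈ Ioi i, ((x i:ℝ) - (x j:ℝ)))) := by
  set P : Matrix (Fin l) (Fin l) ℝ :=
    Matrix.of fun i r : Fin l => ∏ t ∈ Ico ((r:ℕ)+1) l, ((x i:ℝ) + t) with hP
  set B : Matrix (Fin l) (Fin l) ℝ :=
    Matrix.of fun i r : Fin l => (∏ t ∈ Ico l k, ((x i:ℝ) + t)) * P i r with hB
  have h1 : (Matrix.of fun i r : Fin l => Dk k (r:ℕ) (x i))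
      = Matrix.of fun i r : Fin l => (∏ s ∈ range (r:ℕ), ((k-1-s : ℕ):ℝ)) * B i r := by
    ext i r
    simp only [Matrix.of_apply, Dk, Gk, hB, hP]
    rw [← Finset.prod_Ico_consecutive (fun t : ℕ => ((x i:ℝ) + t))
      (by omega : (r:ℕ)+1 ≤ l) hlk]
    ring
  rw [h1, Matrix.det_mul_row (fun r : Fin l => ∏ s ∈ range (r:ℕ), ((k-1-s : ℕ):ℝ)) B]
  congr 1
  rw [hB, Matrix.det_mul_column (fun i => ∏ t ∈ Ico l k, ((x i:ℝ) + t)) P]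
  congr 1
  exact det_P l x

lemma det_hZ (l k : ℕ) (hlk : l ≤ k) (hk : 1 ≤ k) (x : Fin l → ℤ)
    (hx : ∀ i : Fin l, -(i:ℤ) ≤ x i) :
    Matrix.det (Matrix.of fun i j : Fin l => hZ k (x i + ((j:ℕ):ℤ)) (fun _ => 1)) =
      (∏ r : Fin l, (((k-1-(r:ℕ)).factorial : ℕ):ℝ)⁻¹) *
      ((∏ i : Fin l, ∏ t ∈ Ico l k, ((x i:ℝ) + t)) *
      (∏ i : Fin l, ∏ j ∈ Ioi i, ((x i:ℝ) - (x j:ℝ)))) := by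
  set M : Matrix (Fin l) (Fin l) ℝ := Matrix.of fun i j : Fin l => Gk k 0 (x i + ((j:ℕ):ℤ)) with hM
  have h1 : (Matrix.of fun i j : Fin l => hZ k (x i + ((j:ℕ):ℤ)) (fun _ => 1))
      = Matrix.of fun i j : Fin l => (((k-1).factorial : ℕ):ℝ)⁻¹ * M i j := by
    ext i j
    simp only [Matrix.of_apply, hM]
    rw [hZ_ones k hk _ (by have := i.isLt; have := hx i; omega)]
    rw [div_eq_inv_mul]
    congr 1
  rw [h1, Matrix.det_mul_column (fun _ => (((k-1).factorial:ℕ):ℝ)⁻¹) M]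
  set T : Matrix (Fin l) (Fin l) ℝ := Matrix.of fun r j : Fin l => (((j:ℕ).choose (r:ℕ) : ℕ):ℝ) with hT
  set N : Matrix (Fin l) (Fin l) ℝ := Matrix.of fun i r : Fin l => Dk k (r:ℕ) (x i) with hN
  have h2 : M = N * T := by
    ext i j
    rw [Matrix.mul_apply]
    simp only [hM, hN, hT, Matrix.of_apply]
    rw [newton k (j:ℕ) (x i)]
    rw [Fin.sum_univ_eq_sum_range (fun r => Dk k r (x i) * (((j:ℕ).choose r : ℕ):ℝ)) l]
    rw [← Finset.sum_subset (Finset.range_subset_range.mpr (by omega : (j:ℕ)+1 ≤ l))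
      (fun r _ hr => by
        rw [Nat.choose_eq_zero_of_lt (by simpa using hr), Nat.cast_zero, mul_zero])]
    exact Finset.sum_congr rfl fun r _ => by ring
  have h3 : T.det = 1 := by
    rw [Matrix.det_of_upperTriangular (fun i j hij => by
      simp only [hT, Matrix.of_apply]
      rw [Nat.choose_eq_zero_of_lt (by exact_mod_cast hij), Nat.cast_zero])]
    simp [hT]
  rw [h2, Matrix.det_mul, h3, mul_one, det_DkM l k hlk x]
  rw [Finset.prod_const, ← mul_assoc]
  congr 1
  rw [Finset.card_univ, Fintype.card_fin]
  rw [show ((((k-1).factorial:ℕ):ℝ)⁻¹)^l = ∏ _r : Fin l, (((k-1).factorial:ℕ):ℝ)⁻¹ by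
    rw [Finset.prod_const, Finset.card_univ, Fintype.card_fin]]
  rw [← Finset.prod_mul_distrib]
  apply Finset.prod_congr rfl
  intro r _
  have hfac : ((k-1-(r:ℕ)).factorial) * ((k-1).descFactorial (r:ℕ)) = (k-1).factorial := by
    exact Nat.factorial_mul_descFactorial (by have := r.isLt; omega)
  have hdesc : ∏ s ∈ range (r:ℕ), ((k-1-s : ℕ):ℝ) = (((k-1).descFactorial (r:ℕ) : ℕ):ℝ) := by
    rw [Nat.descFactorial_eq_prod_range]
    push_cast
    rfl
  rw [hdesc, inv_mul_eq_iff_eq_mul₀ (by positivity),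
    eq_mul_inv_iff_mul_eq₀ (by positivity), ← Nat.cast_mul,
    mul_comm ((k-1).descFactorial (r:ℕ)) _, hfac]


lemma hook_prod (m : ℕ) (lam : Fin (m+1) → ℕ) (hlam : Antitone lam) (hne : 1 ≤ lam 0) :
    (∏ j ∈ range (lam 0),
        (lam 0 + (univ.filter fun i : Fin (m+1) => j+1 ≤ lam i).card - (j+1)))
      * (∏ i ∈ Ioi (0 : Fin (m+1)), (lam 0 - lam i + (i:ℕ)))
    = (lam 0 + m).factorial := by
  set L := lam 0 with hL
  set c : ℕ → ℕ := fun t => (univ.filter fun i : Fin (m+1) => t ≤ lam i).card with hc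
  have hlamL : ∀ i : Fin (m+1), lam i ≤ L := fun i => hlam (Fin.zero_le i)
  have hc_mono : ∀ t t' : ℕ, t ≤ t' → c t' ≤ c t := by
    intro t t' htt
    apply Finset.card_le_card
    exact Finset.monotone_filter_right univ (fun i _ hi => le_trans htt hi)
  have hc_pos : ∀ t, t ≤ L → 1 ≤ c t := by
    intro t ht
    apply Finset.card_pos.mpr
    exact ⟨0, by simp [hL ▸ ht]⟩
  have hc_le : ∀ t, c t ≤ m + 1 := fun t =>
    le_trans (Finset.card_filter_le _ _) (by simp)
  have hkey1 : ∀ (i : Fin (m+1)) (t : ℕ), t ≤ lam i → (i:ℕ) + 1 ≤ c t := by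
    intro i t ht
    have hsub : Finset.Iic i ⊆ univ.filter fun i' : Fin (m+1) => t ≤ lam i' := by
      intro i' hi'
      simp only [Finset.mem_filter, Finset.mem_univ, true_and]
      exact le_trans ht (hlam (Finset.mem_Iic.mp hi'))
    have := Finset.card_le_card hsub
    rwa [Fin.card_Iic] at this
  have hkey2 : ∀ (i : Fin (m+1)) (t : ℕ), lam i < t → c t ≤ (i:ℕ) := by
    intro i t ht
    have hsub : (univ.filter fun i' : Fin (m+1) => t ≤ lam i') ⊆ Finset.Iio i := by
      intro i' hi'
      simp only [Finset.mem_filter, Finset.mem_univ, true_and] at hi'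
      simp only [Finset.mem_Iio]
      by_contra hcon
      exact absurd (le_trans hi' (hlam (not_lt.mp hcon))) (not_le.mpr ht)
    have := Finset.card_le_card hsub
    rwa [Fin.card_Iio] at this
  set v : Fin (m+1) → ℕ := fun i => L - lam i + (i:ℕ) with hv
  set h : ℕ → ℕ := fun j => L + c (j+1) - (j+1) with hh'
  have hvmono : StrictMono v := by
    intro i j hij
    have h1 : lam j ≤ lam i := hlam hij.le
    have h2 : lam i ≤ L := hlamL i
    have h3 : (i:ℕ) < (j:ℕ) := hij
    simp only [hv]
    omega
  have hinjh : ∀ j ∈ range L, ∀ j' ∈ range L, h j = h j' → j = j' := by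
    have key : ∀ j j', j < j' → j' < L → h j' < h j := by
      intro j j' hjj hj'
      have h1 : c (j'+1) ≤ c (j+1) := hc_mono _ _ (by omega)
      have h2 : 1 ≤ c (j'+1) := hc_pos _ (by omega)
      simp only [hh']
      omega
    intro j hj j' hj' he
    rcases lt_trichotomy j j' with h | h | h
    · exact absurd he (by have := key j j' h (mem_range.mp hj'); omega)
    · exact h
    · exact absurd he (by have := key j' j h (mem_range.mp hj); omega)
  set A := (Ioi (0 : Fin (m+1))).image v with hA
  set B := (range L).image h with hB
  have hdisj : Disjoint A B := by
    rw [Finset.disjoint_left]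
    intro a haA haB
    simp only [hA, hB, Finset.mem_image, Finset.mem_Ioi, Finset.mem_range] at haA haB
    obtain ⟨i, hi0, hvi⟩ := haA
    obtain ⟨j, hjL, hhj⟩ := haB
    have heq : v i = h j := by rw [hvi, hhj]
    by_cases hcase : j + 1 ≤ lam i
    · have := hkey1 i (j+1) hcase
      have h2 : lam i ≤ L := hlamL i
      simp only [hv, hh'] at heq
      omega
    · have := hkey2 i (j+1) (by omega)
      have h2 : lam i ≤ L := hlamL i
      have h3 : 1 ≤ c (j+1) := hc_pos _ (by omega)
      simp only [hv, hh'] at heq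
      omega
  have hsub : A ∪ B ⊆ Icc 1 (L + m) := by
    intro a ha
    rcases Finset.mem_union.mp ha with ha | ha <;>
      simp only [hA, hB, Finset.mem_image, Finset.mem_Ioi, Finset.mem_range] at ha
    · obtain ⟨i, hi0, hvi⟩ := ha
      have h1 : lam i ≤ L := hlamL i
      have h2 : (i:ℕ) ≤ m := by omega
      have h3 : 1 ≤ (i:ℕ) := by
        have : (0 : Fin (m+1)) < i := hi0
        exact this
      simp only [Finset.mem_Icc]
      simp only [hv] at hvi
      omega
    · obtain ⟨j, hjL, hhj⟩ := ha
      have h1 : 1 ≤ c (j+1) := hc_pos _ (by omega)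
      have h2 : c (j+1) ≤ m + 1 := hc_le _
      simp only [Finset.mem_Icc]
      simp only [hh'] at hhj
      omega
  have hcardA : A.card = m := by
    rw [hA, Finset.card_image_of_injective _ hvmono.injective, Fin.card_Ioi]
    simp
  have hcardB : B.card = L := by
    rw [hB, Finset.card_image_of_injOn hinjh]
    exact Finset.card_range L
  have hcardU : (A ∪ B).card = m + L := by
    rw [Finset.card_union_of_disjoint hdisj, hcardA, hcardB]
  have hEq : A ∪ B = Icc 1 (L + m) := by
    apply Finset.eq_of_subset_of_card_le hsub
    rw [hcardU, Nat.card_Icc]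
    omega
  have hprod : ∏ a ∈ Icc 1 (L+m), a = (L+m).factorial := by
    rw [← Finset.Ico_add_one_right_eq_Icc, Finset.prod_Ico_id_eq_factorial]
  rw [← hprod, ← hEq, Finset.prod_union hdisj, hA, hB,
    Finset.prod_image (fun a _ b _ hab => hvmono.injective hab),
    Finset.prod_image hinjh]
  rw [mul_comm]


lemma natprod1 (m : ℕ) : ∀ L : ℕ,
    (∏ j ∈ range L, (m+2+j)) * (m+1).factorial = (L + m + 1).factorial := by
  intro L
  induction L with
  | zero => simp
  | succ n ih =>
    calc (∏ j ∈ range (n+1), (m+2+j)) * (m+1).factorial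
        = (m+2+n) * ((∏ j ∈ range n, (m+2+j)) * (m+1).factorial) := by
          rw [Finset.prod_range_succ]; ring
      _ = (m+2+n) * (n+m+1).factorial := by rw [ih]
      _ = (n+1+m+1).factorial := by
          rw [show m+2+n = n+m+1+1 by omega, show n+1+m+1 = (n+m+1)+1 by omega]
          exact (Nat.factorial_succ _).symm


end HookContentAux

open Finset HookContentAux in
/-- For a nonempty partition `λ` of length at most `n = m+1` with bottom partition `λ⁽⁰⁾`:
`f_λ(n+1)/f_{λ⁽⁰⁾}(n) = Π_{j=1}^{λ₁} ((n+1)+c_λ(1,j))/h_λ(1,j)`, where `c_λ(1,j) = j−1`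
and `h_λ(1,j) = λ₁ + λ'_j − j`, with `f_μ(m) = S_μ(1,…,1)` (m ones). -/
theorem hook_content_ratio (m : ℕ) (lam : Fin (m + 1) → ℕ) (hlam : Antitone lam)
    (hne : 1 ≤ lam 0) :
    schur lam (fun _ : Fin (m + 2) => (1 : ℝ)) /
        schur (fun i : Fin m => lam i.succ) (fun _ : Fin (m + 1) => (1 : ℝ))
      = ∏ j ∈ Finset.range (lam 0),
          ((m + 2 : ℝ) + (j : ℝ)) /
            ((lam 0 : ℝ) + ((Finset.univ.filter fun i : Fin (m + 1) => j + 1 ≤ lam i).card : ℝ)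
              - ((j : ℝ) + 1)) := by
  have hlamL : ∀ i : Fin (m+1), lam i ≤ lam 0 := fun i => hlam (Fin.zero_le i)
  set xN : Fin (m+1) → ℤ := fun i => (lam i : ℤ) - ((i:ℕ):ℤ) with hxN
  set xD : Fin m → ℤ := fun i => (lam i.succ : ℤ) - ((i:ℕ):ℤ) with hxD
  have hnum : schur lam (fun _ : Fin (m+2) => (1:ℝ)) =
      (∏ r : Fin (m+1), (((m+2-1-(r:ℕ)).factorial : ℕ):ℝ)⁻¹) *
      ((∏ i : Fin (m+1), ∏ t ∈ Ico (m+1) (m+2), ((xN i:ℝ) + t)) *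
      (∏ i : Fin (m+1), ∏ j ∈ Ioi i, ((xN i:ℝ) - (xN j:ℝ)))) := by
    rw [schur]
    exact det_hZ (m+1) (m+2) (by omega) (by omega) xN
      (fun i => by simp only [hxN]; have : (0:ℤ) ≤ (lam i : ℤ) := Int.natCast_nonneg _; omega)
  have hden : schur (fun i : Fin m => lam i.succ) (fun _ : Fin (m+1) => (1:ℝ)) =
      (∏ r : Fin m, (((m+1-1-(r:ℕ)).factorial : ℕ):ℝ)⁻¹) *
      ((∏ i : Fin m, ∏ t ∈ Ico m (m+1), ((xD i:ℝ) + t)) *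
      (∏ i : Fin m, ∏ j ∈ Ioi i, ((xD i:ℝ) - (xD j:ℝ)))) := by
    rw [schur]
    exact det_hZ m (m+1) (by omega) (by omega) xD
      (fun i => by simp only [hxD]; have : (0:ℤ) ≤ (lam i.succ : ℤ) := Int.natCast_nonneg _; omega)
  set CN := ∏ r : Fin (m+1), (((m+2-1-(r:ℕ)).factorial : ℕ):ℝ)⁻¹ with hCN
  set CD := ∏ r : Fin m, (((m+1-1-(r:ℕ)).factorial : ℕ):ℝ)⁻¹ with hCD
  set RN := ∏ i : Fin (m+1), ∏ t ∈ Ico (m+1) (m+2), ((xN i:ℝ) + t) with hRN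
  set RD := ∏ i : Fin m, ∏ t ∈ Ico m (m+1), ((xD i:ℝ) + t) with hRD
  set VN := ∏ i : Fin (m+1), ∏ j ∈ Ioi i, ((xN i:ℝ) - (xN j:ℝ)) with hVN
  set VD := ∏ i : Fin m, ∏ j ∈ Ioi i, ((xD i:ℝ) - (xD j:ℝ)) with hVD
  set P0 := ∏ j ∈ Ioi (0 : Fin (m+1)), ((xN 0 : ℝ) - (xN j : ℝ)) with hP0
  have rel1 : CN = (((m+1).factorial : ℕ):ℝ)⁻¹ * CD := by
    rw [hCN, hCD,
      Fin.prod_univ_eq_prod_range (fun r => (((m+2-1-r).factorial : ℕ):ℝ)⁻¹) (m+1),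
      Fin.prod_univ_eq_prod_range (fun r => (((m+1-1-r).factorial : ℕ):ℝ)⁻¹) m,
      Finset.prod_range_succ' (fun r => (((m+2-1-r).factorial : ℕ):ℝ)⁻¹) m]
    have hstep : ∀ i ∈ range m,
        (((m+2-1-(i+1)).factorial : ℕ):ℝ)⁻¹ = (((m+1-1-i).factorial : ℕ):ℝ)⁻¹ :=
      fun i _ => by rw [show m+2-1-(i+1) = m+1-1-i from by omega]
    rw [Finset.prod_congr rfl hstep, show m+2-1-0 = m+1 from by omega]
    ring
  have rel2 : RN = ((lam 0 : ℝ) + (m+1)) * RD := by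
    rw [hRN, hRD]
    rw [show m+2 = (m+1)+1 from rfl, Nat.Ico_succ_singleton, Nat.Ico_succ_singleton]
    simp only [Finset.prod_singleton]
    rw [Fin.prod_univ_succ (fun i : Fin (m+1) => (xN i : ℝ) + ((m+1:ℕ):ℝ))]
    congr 1
    · simp [hxN]
    · apply Finset.prod_congr rfl
      intro i _
      simp only [hxN, hxD]
      push_cast [Fin.val_succ]
      ring
  have rel3 : VN = P0 * VD := by
    rw [hVN, hVD, hP0]
    rw [Fin.prod_univ_succ (fun i : Fin (m+1) => ∏ j ∈ Ioi i, ((xN i:ℝ) - (xN j:ℝ)))]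
    congr 1
    apply Finset.prod_congr rfl
    intro i _
    rw [Fin.prod_Ioi_succ]
    apply Finset.prod_congr rfl
    intro j _
    simp only [hxN, hxD]
    push_cast [Fin.val_succ]
    ring
  have hRDpos : 0 < RD := by
    rw [hRD]
    apply Finset.prod_pos
    intro i _
    apply Finset.prod_pos
    intro t ht
    have h1 : (0:ℝ) ≤ (lam i.succ : ℝ) := Nat.cast_nonneg _
    have h2 : (i:ℕ) < m := i.isLt
    have h3 : m ≤ t := (Finset.mem_Ico.mp ht).1
    simp only [hxD]
    push_cast
    have : ((i:ℕ):ℝ) < (t:ℝ) := by exact_mod_cast lt_of_lt_of_le h2 h3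
    linarith
  have hVDpos : 0 < VD := by
    rw [hVD]
    apply Finset.prod_pos
    intro i _
    apply Finset.prod_pos
    intro j hj
    have hij : i < j := Finset.mem_Ioi.mp hj
    have h1 : lam j.succ ≤ lam i.succ := hlam (Fin.succ_le_succ_iff.mpr hij.le)
    have h2 : (i:ℕ) < (j:ℕ) := hij
    simp only [hxD]
    have h1' : ((lam j.succ : ℝ)) ≤ ((lam i.succ : ℝ)) := by exact_mod_cast h1
    push_cast
    have h3 : ((i:ℕ):ℝ) < ((j:ℕ):ℝ) := by exact_mod_cast h2
    linarith
  have hCDpos : 0 < CD := by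
    rw [hCD]
    apply Finset.prod_pos
    intro r _
    have : 0 < (((m+1-1-(r:ℕ)).factorial : ℕ):ℝ) := by positivity
    exact inv_pos.mpr this
  have hdenpos : 0 < CD * (RD * VD) := mul_pos hCDpos (mul_pos hRDpos hVDpos)
  have hLHSval : CN * (RN * VN) / (CD * (RD * VD))
      = (((m+1).factorial : ℕ):ℝ)⁻¹ * (((lam 0:ℝ) + (m+1)) * P0) := by
    rw [rel1, rel2, rel3, div_eq_iff (ne_of_gt hdenpos)]
    ring
  rw [hnum, hden, hLHSval]
  -- RHS work
  have hcpos : ∀ t, t ≤ lam 0 → 1 ≤ (univ.filter fun i : Fin (m+1) => t ≤ lam i).card := by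
    intro t ht
    apply Finset.card_pos.mpr
    exact ⟨0, by simp only [Finset.mem_filter, Finset.mem_univ, true_and]; exact ht⟩
  have hNat2 := hook_prod m lam hlam hne
  set PP := ∏ i ∈ Ioi (0 : Fin (m+1)), (lam 0 - lam i + (i:ℕ)) with hPP
  set HH := ∏ j ∈ range (lam 0),
      (lam 0 + (univ.filter fun i : Fin (m+1) => j+1 ≤ lam i).card - (j+1)) with hHH
  set NN := ∏ j ∈ range (lam 0), (m+2+j) with hNN
  have hNat1 := natprod1 m (lam 0)
  have hP0cast : P0 = (PP : ℝ) := by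
    rw [hP0, hPP, Nat.cast_prod]
    apply Finset.prod_congr rfl
    intro j _
    have h1 : lam j ≤ lam 0 := hlamL j
    simp only [hxN]
    push_cast [Nat.cast_sub h1, Fin.val_zero]
    ring
  have hRHS : (∏ j ∈ Finset.range (lam 0),
      ((m + 2 : ℝ) + (j : ℝ)) /
        ((lam 0 : ℝ) + ((Finset.univ.filter fun i : Fin (m + 1) => j + 1 ≤ lam i).card : ℝ)
          - ((j : ℝ) + 1)))
      = (NN : ℝ) / (HH : ℝ) := by
    rw [Finset.prod_div_distrib]
    congr 1
    · rw [hNN, Nat.cast_prod]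
      apply Finset.prod_congr rfl
      intro j _
      push_cast
      ring
    · rw [hHH, Nat.cast_prod]
      apply Finset.prod_congr rfl
      intro j hj
      have h1 : 1 ≤ (univ.filter fun i : Fin (m+1) => j+1 ≤ lam i).card :=
        hcpos _ (by have := mem_range.mp hj; omega)
      have h2 : j + 1 ≤ lam 0 + (univ.filter fun i : Fin (m+1) => j+1 ≤ lam i).card := by
        have := mem_range.mp hj; omega
      rw [Nat.cast_sub h2]
      push_cast
      ring
  rw [hRHS]
  have hHHpos : 0 < HH := by
    rw [hHH]
    apply Finset.prod_pos
    intro j hj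
    have h1 : 1 ≤ (univ.filter fun i : Fin (m+1) => j+1 ≤ lam i).card :=
      hcpos _ (by have := mem_range.mp hj; omega)
    have := mem_range.mp hj
    omega
  have e1 : (NN:ℝ) * (((m+1).factorial:ℕ):ℝ) = (((lam 0+m+1).factorial : ℕ):ℝ) := by
    exact_mod_cast congrArg (fun x : ℕ => (x:ℝ)) hNat1
  have e2 : (HH:ℝ) * (PP:ℝ) = (((lam 0+m).factorial : ℕ):ℝ) := by
    exact_mod_cast congrArg (fun x : ℕ => (x:ℝ)) hNat2
  have e3 : (((lam 0+m+1).factorial : ℕ):ℝ)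
      = ((lam 0:ℝ)+m+1) * (((lam 0+m).factorial : ℕ):ℝ) := by
    rw [show lam 0+m+1 = (lam 0+m)+1 from rfl, Nat.factorial_succ]
    push_cast
    ring
  have einv : (((m+1).factorial:ℕ):ℝ)⁻¹ * (((m+1).factorial:ℕ):ℝ) = 1 :=
    inv_mul_cancel₀ (by positivity)
  rw [hP0cast, eq_div_iff (by positivity : (HH:ℝ) ≠ 0)]
  linear_combination ((((m+1).factorial:ℕ):ℝ)⁻¹ * ((lam 0:ℝ)+m+1)) * e2
    - (((m+1).factorial:ℕ):ℝ)⁻¹ * e3 - (((m+1).factorial:ℕ):ℝ)⁻¹ * e1 + (NN:ℝ) * einv
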